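/- arXiv:2012.03024 — 2 statements merged into one kernel-verified Lean document; each statement's English description precedes it below -/
import Mathlib

section
/- A real 3×3 matrix A with invariants d₁ = tr A, d₂ = sum of principal 2×2 minors, d₃ = det A has a pair of nonzero purely imaginary eigenvalues ±iω (ω > 0) if and only if d₃ = d₁d₂ and d₂ > 0. -/
/-- A real 3×3 matrix with invariants d₁ = trace, d₂ = sum of principal 2×2 minors,
d₃ = determinant has a pair of nonzero purely imaginary eigenvalues ±iω (ω > 0)
iff d₃ = d₁ d₂ and d₂ > 0. -/
theorem stmt_7 (A : Matrix (Fin 3) (Fin 3) ℝ)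
    (d₁ d₂ d₃ : ℝ)
    (h₁ : d₁ = Matrix.trace A)
    (h₂ : d₂ = (A 0 0 * A 1 1 - A 0 1 * A 1 0) + (A 0 0 * A 2 2 - A 0 2 * A 2 0) +
               (A 1 1 * A 2 2 - A 1 2 * A 2 1))
    (h₃ : d₃ = A.det) :
    (∃ ω : ℝ, 0 < ω ∧
        ((A.map (algebraMap ℝ ℂ)).charpoly).IsRoot (Complex.I * ω) ∧
        ((A.map (algebraMap ℝ ℂ)).charpoly).IsRoot (-(Complex.I * ω))) ↔
      d₃ = d₁ * d₂ ∧ 0 < d₂ := by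
  have key : ∀ x : ℂ, ((A.map (algebraMap ℝ ℂ)).charpoly).eval x =
      x^3 - (d₁ : ℝ) * x^2 + (d₂ : ℝ) * x - (d₃ : ℝ) := by
    intro x
    rw [Matrix.charpoly, ← Polynomial.coe_evalRingHom, RingHom.map_det,
      Matrix.det_fin_three]
    subst h₁ h₂ h₃
    simp [Matrix.charmatrix_apply, Matrix.det_fin_three, Matrix.trace_fin_three,
      Matrix.one_apply]
    ring
  constructor
  · rintro ⟨ω, hω, h, -⟩
    rw [Polynomial.IsRoot, key] at h
    have hc : ((d₁ * (ω*ω) - d₃ : ℝ) : ℂ) + ((ω * d₂ - ω*ω*ω : ℝ) : ℂ) * Complex.I = 0 := by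
      push_cast
      linear_combination (d₁ * (ω:ℂ)^2 - (ω:ℂ)^3 * Complex.I) * Complex.I_sq + h
    rw [Complex.ext_iff] at hc
    simp [Complex.add_re, Complex.add_im, Complex.mul_re, Complex.mul_im] at hc
    obtain ⟨hre, him⟩ := hc
    have h0 : ω * (d₂ - ω^2) = 0 := by linear_combination him
    have hd2 : d₂ = ω^2 := by
      rcases mul_eq_zero.mp h0 with h' | h'
      · exact absurd h' (ne_of_gt hω)
      · linarith
    refine ⟨?_, by rw [hd2]; positivity⟩
    rw [hd2]
    linear_combination -hre
  · rintro ⟨hd3, hd2⟩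
    have hA : ((d₂ : ℝ) : ℂ) = (Real.sqrt d₂ : ℂ)^2 := by
      rw [← Complex.ofReal_pow, Real.sq_sqrt hd2.le]
    have hB : ((d₃ : ℝ) : ℂ) = (d₁ : ℝ) * (d₂ : ℝ) := by push_cast [hd3]; ring
    set ω : ℂ := (Real.sqrt d₂ : ℂ) with hωdef
    refine ⟨Real.sqrt d₂, Real.sqrt_pos.mpr hd2, ?_, ?_⟩
    · rw [Polynomial.IsRoot, key]
      linear_combination (Complex.I * ω^3 - (d₁:ℂ) * ω^2) * Complex.I_sq +
        (Complex.I * ω - (d₁:ℂ)) * hA - hB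
    · rw [Polynomial.IsRoot, key]
      linear_combination (-(Complex.I * ω^3) - (d₁:ℂ) * ω^2) * Complex.I_sq +
        (-(Complex.I * ω) - (d₁:ℂ)) * hA - hB
end

section
/- A real 4×4 matrix A with characteristic polynomial λ⁴ - d₁λ³ + d₂λ² - d₃λ + d₄ and d₁ ≠ 0 has a pair of nonzero purely imaginary eigenvalues ±iω (ω ≠ 0) if and only if d₄d₁² - d₁d₂d₃ + d₃² = 0 and d₁d₃ > 0. -/
open Polynomial

lemma stmt_13_aux (a b : ℝ) : (a : ℂ) + Complex.I * b = 0 ↔ a = 0 ∧ b = 0 := by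
  rw [Complex.ext_iff]
  simp [Complex.add_re, Complex.add_im, Complex.mul_re, Complex.mul_im]

open Polynomial in
/-- A real 4×4 matrix A with characteristic polynomial λ⁴ - d₁λ³ + d₂λ² - d₃λ + d₄
and d₁ ≠ 0 has a pair of nonzero purely imaginary eigenvalues ±iω iff
d₄d₁² - d₁d₂d₃ + d₃² = 0 and d₁d₃ > 0. -/
theorem stmt_13 (A : Matrix (Fin 4) (Fin 4) ℝ) (d₁ d₂ d₃ d₄ : ℝ) (hd₁ : d₁ ≠ 0)
    (hchar : Matrix.charpoly A =
      X ^ 4 - C d₁ * X ^ 3 + C d₂ * X ^ 2 - C d₃ * X + C d₄) :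
    (∃ ω : ℝ, ω ≠ 0 ∧
        ((A.map (algebraMap ℝ ℂ)).charpoly).IsRoot (Complex.I * ω) ∧
        ((A.map (algebraMap ℝ ℂ)).charpoly).IsRoot (-(Complex.I * ω))) ↔
      d₄ * d₁ ^ 2 - d₁ * d₂ * d₃ + d₃ ^ 2 = 0 ∧ 0 < d₁ * d₃ := by
  have hmap : (A.map (algebraMap ℝ ℂ)).charpoly
      = (Matrix.charpoly A).map (algebraMap ℝ ℂ) := Matrix.charpoly_map A _
  have hI2 : (Complex.I : ℂ) ^ 2 = -1 := Complex.I_sq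
  have hI3 : (Complex.I : ℂ) ^ 3 = -Complex.I := by
    rw [pow_succ, hI2]; ring
  have hI4 : (Complex.I : ℂ) ^ 4 = 1 := by
    rw [pow_succ, hI3]; simp [Complex.I_mul_I]
  have key : ∀ ω : ℝ, ((A.map (algebraMap ℝ ℂ)).charpoly).IsRoot (Complex.I * ω) ↔
      (ω^4 - d₂*ω^2 + d₄ = 0 ∧ d₁*ω^3 - d₃*ω = 0) := by
    intro ω
    rw [hmap, hchar]
    have heval : Polynomial.eval (Complex.I * ω)
        ((X ^ 4 - C d₁ * X ^ 3 + C d₂ * X ^ 2 - C d₃ * X + C d₄).map (algebraMap ℝ ℂ))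
        = ((ω^4 - d₂*ω^2 + d₄ : ℝ) : ℂ) + Complex.I * ((d₁*ω^3 - d₃*ω : ℝ) : ℂ) := by
      simp only [Polynomial.eval_map, Polynomial.eval₂_sub, Polynomial.eval₂_add,
        Polynomial.eval₂_mul, Polynomial.eval₂_pow, Polynomial.eval₂_X, Polynomial.eval₂_C,
        Complex.coe_algebraMap, mul_pow, hI2, hI3, hI4]
      push_cast
      ring
    rw [Polynomial.IsRoot, heval, stmt_13_aux]
  have key' : ∀ ω : ℝ, ((A.map (algebraMap ℝ ℂ)).charpoly).IsRoot (-(Complex.I * ω)) ↔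
      (ω^4 - d₂*ω^2 + d₄ = 0 ∧ d₁*ω^3 - d₃*ω = 0) := by
    intro ω
    have h : -(Complex.I * (ω : ℂ)) = Complex.I * ((-ω : ℝ) : ℂ) := by push_cast; ring
    rw [h, key]
    constructor <;> rintro ⟨h1, h2⟩ <;> exact ⟨by nlinarith [h1], by nlinarith [h2]⟩
  constructor
  · rintro ⟨ω, hω, h1, -⟩
    rw [key] at h1
    obtain ⟨e1, e2⟩ := h1
    have hsq : ω^2 > 0 := by positivity
    have hfac : (d₁ * ω^2 - d₃) * ω = 0 := by linear_combination e2
    have hd3 : d₃ = d₁ * ω^2 := by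
      rcases mul_eq_zero.mp hfac with h | h
      · linarith
      · exact absurd h hω
    constructor
    · subst hd3; nlinarith [e1]
    · subst hd3
      have : d₁ * (d₁ * ω^2) = d₁^2 * ω^2 := by ring
      rw [this]
      positivity
  · rintro ⟨he, hpos⟩
    have hratio : d₃ / d₁ > 0 := by
      rcases lt_or_gt_of_ne hd₁ with h | h
      · have hneg : d₃ < 0 := by nlinarith
        exact div_pos_of_neg_of_neg hneg h
      · have hp : d₃ > 0 := by nlinarith
        exact div_pos hp h
    set ω := Real.sqrt (d₃ / d₁) with hωdef
    have hωsq : ω^2 = d₃ / d₁ := Real.sq_sqrt hratio.le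
    have hωpos : ω > 0 := Real.sqrt_pos.mpr hratio
    have h1 : d₁ * ω^2 = d₃ := by
      rw [hωsq]; field_simp
    have h2 : ω^4 * d₁^2 = d₃^2 := by
      have : ω^4 = (d₃/d₁)^2 := by rw [← hωsq]; ring
      rw [this]; field_simp
    have e1 : ω^4 - d₂*ω^2 + d₄ = 0 := by
      have h3 : (ω^4 - d₂*ω^2 + d₄) * d₁^2 = 0 := by
        linear_combination he + h2 - d₂ * d₁ * h1
      rcases mul_eq_zero.mp h3 with h | h
      · exact h
      · exact absurd h (pow_ne_zero 2 hd₁)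
    have e2 : d₁*ω^3 - d₃*ω = 0 := by linear_combination ω * h1
    exact ⟨ω, hωpos.ne', (key ω).mpr ⟨e1, e2⟩, (key' ω).mpr ⟨e1, e2⟩⟩
end
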